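/- arXiv:1605.09201 — 2 statements merged into one kernel-verified Lean document; each statement's English description precedes it below -/
import Mathlib

section
/- (Multi-dimensional cell convergence to the delta of a graph, Lemma on rescaled Hough counters.) Let E′ ⊆ ℝ^{t−1} be open (t ≥ 2), Ξ ⊆ ℝ with accumulation point ξ̄. For each ξ ∈ Ξ let U_ξ, V_ξ : E′ → ℝ be piecewise C¹ with V_ξ − U_ξ > ε_ξ > 0, both converging pointwise to a common limit G ∈ C¹(E′), with u_ξ := U_ξ − G and v_ξ := V_ξ − G uniformly bounded by a constant M. Set C_ξ = {(λ′,λ_t) : U_ξ(λ′) ≤ λ_t < V_ξ(λ′)} and T_ξ = 𝟙_{C_ξ}/(V_ξ − U_ξ). Then for every ψ ∈ C¹_c(E′×ℝ): ∫_{E′×ℝ} T_ξ(λ) ψ(λ) dλ → ∫_{E′} ψ(λ′, G(λ′)) dλ′ as ξ → ξ̄. -/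
open MeasureTheory Filter

/-- A real function is piecewise `C¹` if there is a countable family of open sets with
negligible boundaries whose closures cover the space, on each of which it is `C¹`. -/
def PiecewiseC1 {X : Type*} [NormedAddCommGroup X] [NormedSpace ℝ X] [MeasureSpace X]
    (f : X → ℝ) : Prop :=
  ∃ Q : Set (Set X), Q.Countable ∧
    (∀ u ∈ Q, IsOpen u ∧ volume (frontier u) = 0 ∧ ContDiffOn ℝ 1 f u) ∧
    (Set.univ ⊆ ⋃ u ∈ Q, closure u)

lemma PiecewiseC1.aemeasurable {n : ℕ} {f : (Fin n → ℝ) → ℝ} (hf : PiecewiseC1 f) :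
    AEMeasurable f volume := by
  obtain ⟨Q, hQc, hQ, hcov⟩ := hf
  have hW : volume ((⋃ u ∈ Q, u)ᶜ) = 0 := by
    have hsub : (⋃ u ∈ Q, u)ᶜ ⊆ ⋃ u ∈ Q, frontier u := by
      intro x hx
      obtain ⟨u, hu, hxu⟩ := Set.mem_iUnion₂.1 (hcov (Set.mem_univ x))
      refine Set.mem_iUnion₂.2 ⟨u, hu, ?_⟩
      have hxnu : x ∉ u := fun h => hx (Set.mem_iUnion₂.2 ⟨u, hu, h⟩)
      rw [frontier, (hQ u hu).1.interior_eq]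
      exact ⟨hxu, hxnu⟩
    exact measure_mono_null hsub
      ((measure_biUnion_null_iff hQc).2 fun u hu => (hQ u hu).2.1)
  have hr : AEMeasurable f (volume.restrict (⋃ u ∈ Q, u)) := by
    haveI := hQc.to_subtype
    rw [Set.biUnion_eq_iUnion, aemeasurable_iUnion_iff]
    intro u
    exact ((hQ u u.2).2.2.continuousOn).aemeasurable (hQ u u.2).1.measurableSet
  have hself : volume.restrict (⋃ u ∈ Q, u) = volume :=
    Measure.restrict_eq_self_of_ae_mem (by
      rw [Filter.eventually_iff, Set.setOf_mem_eq]
      exact mem_ae_iff.2 hW)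
  rwa [hself] at hr

/-- Multi-dimensional cell convergence to the delta of a graph: the normalized indicators
`𝟙_{C_ξ}/(V_ξ − U_ξ)` of the shrinking cells `C_ξ = {(λ′,λ_t) : U_ξ(λ′) ≤ λ_t < V_ξ(λ′)}`
converge, when paired with any `ψ ∈ C¹_c(E′×ℝ)`, to the pairing
`∫_{E′} ψ(λ′, G(λ′)) dλ′` of `ψ` with the delta distribution supported on the graph
of the common limit `G`. -/
theorem stmt_15 {t : ℕ} (ht : 2 ≤ t)
    (E' : Set (Fin (t - 1) → ℝ)) (hE' : IsOpen E') (hE'ne : E'.Nonempty)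
    (Ξ : Set ℝ) (ξb : ℝ) (hacc : (nhdsWithin ξb (Ξ \ {ξb})).NeBot)
    (U V : ℝ → (Fin (t - 1) → ℝ) → ℝ)
    (hpc : ∀ ξ ∈ Ξ, PiecewiseC1 (U ξ) ∧ PiecewiseC1 (V ξ))
    (ε : ℝ → ℝ)
    (hε : ∀ ξ ∈ Ξ, 0 < ε ξ ∧ ∀ l' ∈ E', ε ξ < V ξ l' - U ξ l')
    (G : (Fin (t - 1) → ℝ) → ℝ) (hG : ContDiffOn ℝ 1 G E')
    (hUG : ∀ l' ∈ E', Tendsto (fun ξ => U ξ l') (nhdsWithin ξb (Ξ \ {ξb})) (nhds (G l')))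
    (hVG : ∀ l' ∈ E', Tendsto (fun ξ => V ξ l') (nhdsWithin ξb (Ξ \ {ξb})) (nhds (G l')))
    (M : ℝ) (hM : ∀ ξ ∈ Ξ, ∀ l' ∈ E', |U ξ l' - G l'| ≤ M ∧ |V ξ l' - G l'| ≤ M)
    (ψ : ((Fin (t - 1) → ℝ) × ℝ) → ℂ)
    (hψ : ContDiff ℝ 1 ψ) (hψc : HasCompactSupport ψ)
    (hψs : tsupport ψ ⊆ E' ×ˢ (Set.univ : Set ℝ)) :
    Tendsto
      (fun ξ => ∫ l in {l : (Fin (t - 1) → ℝ) × ℝ | U ξ l.1 ≤ l.2 ∧ l.2 < V ξ l.1},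
        Complex.ofReal ((V ξ l.1 - U ξ l.1)⁻¹) * ψ l)
      (nhdsWithin ξb (Ξ \ {ξb}))
      (nhds (∫ l' in E', ψ (l', G l'))) := by
  classical
  set F := nhdsWithin ξb (Ξ \ {ξb}) with hFdef
  obtain ⟨C, hC⟩ := hψc.exists_bound_of_continuous hψ.continuous
  have hC0 : 0 ≤ C := le_trans (norm_nonneg _) (hC (hE'ne.some, 0))
  set K : Set (Fin (t - 1) → ℝ) := Prod.fst '' tsupport ψ with hKdef
  have hKc : IsCompact K := hψc.image continuous_fst
  have hKE : K ⊆ E' := by rintro _ ⟨l, hl, rfl⟩; exact (hψs hl).1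
  have hψ0 : ∀ x, x ∉ K → ∀ y, ψ (x, y) = 0 := by
    intro x hx y
    by_contra h
    exact hx ⟨(x, y), subset_tsupport ψ h, rfl⟩
  have hψ0' : ∀ x, x ∉ E' → ∀ y, ψ (x, y) = 0 := by
    intro x hx y
    by_contra h
    exact hx (hψs (subset_tsupport ψ h)).1
  -- the sets and integrands
  set S : ℝ → Set ((Fin (t - 1) → ℝ) × ℝ) :=
    fun ξ => {l : (Fin (t - 1) → ℝ) × ℝ | U ξ l.1 ≤ l.2 ∧ l.2 < V ξ l.1} with hSdef
  set h : ℝ → ((Fin (t - 1) → ℝ) × ℝ) → ℂ :=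
    fun ξ l => Complex.ofReal ((V ξ l.1 - U ξ l.1)⁻¹) * ψ l with hhdef
  set g : ℝ → (Fin (t - 1) → ℝ) → ℂ :=
    fun ξ x => ∫ y : ℝ, Set.indicator (S ξ) (h ξ) (x, y) with hgdef
  have hmemΞ : ∀ᶠ ξ in F, ξ ∈ Ξ := by
    filter_upwards [self_mem_nhdsWithin] with ξ hξ using hξ.1
  -- slice identity
  have hslice : ∀ ξ x, g ξ x
      = Complex.ofReal ((V ξ x - U ξ x)⁻¹) * ∫ y in Set.Ico (U ξ x) (V ξ x), ψ (x, y) := by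
    intro ξ x
    have hid : ∀ y : ℝ, Set.indicator (S ξ) (h ξ) (x, y)
        = Set.indicator (Set.Ico (U ξ x) (V ξ x)) (fun y => h ξ (x, y)) y := by
      intro y
      by_cases hy : U ξ x ≤ y ∧ y < V ξ x
      · rw [Set.indicator_of_mem (Set.mem_Ico.2 hy), Set.indicator_of_mem (by exact hy)]
      · rw [Set.indicator_of_notMem (fun hmem => hy (Set.mem_Ico.1 hmem)),
          Set.indicator_of_notMem (by exact hy)]
    rw [hgdef]
    simp only [hid]
    rw [integral_indicator measurableSet_Ico]
    simp only [hhdef]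
    show (∫ y in Set.Ico (U ξ x) (V ξ x), Complex.ofReal ((V ξ x - U ξ x)⁻¹) * ψ (x, y))
      = Complex.ofReal ((V ξ x - U ξ x)⁻¹) * ∫ y in Set.Ico (U ξ x) (V ξ x), ψ (x, y)
    exact integral_const_mul _ _
  -- zero off E'
  have hzero : ∀ ξ x, x ∉ E' → g ξ x = 0 := by
    intro ξ x hx
    rw [hslice ξ x]
    have : ∀ y ∈ Set.Ico (U ξ x) (V ξ x), ψ (x, y) = 0 := fun y _ => hψ0' x hx y
    rw [setIntegral_congr_fun measurableSet_Ico this]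
    simp
  have hzeroK : ∀ ξ x, x ∉ K → g ξ x = 0 := by
    intro ξ x hx
    rw [hslice ξ x]
    have : ∀ y ∈ Set.Ico (U ξ x) (V ξ x), ψ (x, y) = 0 := fun y _ => hψ0 x hx y
    rw [setIntegral_congr_fun measurableSet_Ico this]
    simp
  -- uniform bound
  have hgbound : ∀ ξ ∈ Ξ, ∀ x, ‖g ξ x‖ ≤ K.indicator (fun _ => C) x := by
    intro ξ hξ x
    by_cases hxK : x ∈ K
    · rw [Set.indicator_of_mem hxK]
      have hxE : x ∈ E' := hKE hxK
      have hε1 := (hε ξ hξ).1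
      have hε2 := (hε ξ hξ).2 x hxE
      have hd : 0 < V ξ x - U ξ x := hε1.trans hε2
      rw [hslice ξ x, norm_mul]
      have hfin : volume (Set.Ico (U ξ x) (V ξ x)) < ⊤ := by
        rw [Real.volume_Ico]; exact ENNReal.ofReal_lt_top
      have hvol : (volume (Set.Ico (U ξ x) (V ξ x))).toReal = V ξ x - U ξ x := by
        rw [Real.volume_Ico, ENNReal.toReal_ofReal hd.le]
      have hnorm : ‖∫ y in Set.Ico (U ξ x) (V ξ x), ψ (x, y)‖
          ≤ C * (V ξ x - U ξ x) := by
        have := norm_setIntegral_le_of_norm_le_const (μ := volume)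
          (s := Set.Ico (U ξ x) (V ξ x)) (C := C) hfin (fun y _ => hC (x, y))
        rwa [measureReal_def, hvol] at this
      have hn1 : ‖(Complex.ofReal ((V ξ x - U ξ x)⁻¹))‖ = (V ξ x - U ξ x)⁻¹ := by
        rw [Complex.norm_real, Real.norm_eq_abs, abs_of_pos (inv_pos.2 hd)]
      rw [hn1]
      calc (V ξ x - U ξ x)⁻¹ * ‖∫ y in Set.Ico (U ξ x) (V ξ x), ψ (x, y)‖
          ≤ (V ξ x - U ξ x)⁻¹ * (C * (V ξ x - U ξ x)) :=
            mul_le_mul_of_nonneg_left hnorm (by positivity)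
        _ = C := by field_simp
    · rw [Set.indicator_of_notMem hxK, hzeroK ξ x hxK]
      simp
  -- per-ξ measurability and Fubini identity
  have key : ∀ ξ ∈ Ξ, AEStronglyMeasurable (g ξ) volume ∧
      (∫ l in S ξ, h ξ l) = ∫ x, g ξ x := by
    intro ξ hξ
    have hUa : AEMeasurable (U ξ) volume := ((hpc ξ hξ).1).aemeasurable
    have hVa : AEMeasurable (V ξ) volume := ((hpc ξ hξ).2).aemeasurable
    have qmp : Measure.QuasiMeasurePreserving
        (Prod.fst : (Fin (t - 1) → ℝ) × ℝ → (Fin (t - 1) → ℝ)) volume volume := by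
      rw [Measure.volume_eq_prod]
      exact Measure.quasiMeasurePreserving_fst
    have hU1 : AEMeasurable (fun l : (Fin (t - 1) → ℝ) × ℝ => U ξ l.1) volume :=
      hUa.comp_quasiMeasurePreserving qmp
    have hV1 : AEMeasurable (fun l : (Fin (t - 1) → ℝ) × ℝ => V ξ l.1) volume :=
      hVa.comp_quasiMeasurePreserving qmp
    have hsnd : AEMeasurable (fun l : (Fin (t - 1) → ℝ) × ℝ => l.2) volume :=
      measurable_snd.aemeasurable
    have hSnull : NullMeasurableSet (S ξ) volume := by
      rw [hSdef]
      simp only [Set.setOf_and]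
      exact (nullMeasurableSet_le hU1 hsnd).inter (nullMeasurableSet_lt hsnd hV1)
    have hhm : AEStronglyMeasurable (h ξ) volume := by
      have : AEMeasurable (h ξ) volume :=
        (Complex.measurable_ofReal.comp_aemeasurable ((hV1.sub hU1).inv)).mul
          hψ.continuous.aemeasurable
      exact this.aestronglyMeasurable
    have hST : (toMeasurable volume (S ξ)) =ᵐ[volume] (S ξ) := hSnull.toMeasurable_ae_eq
    have hfm : AEStronglyMeasurable ((S ξ).indicator (h ξ)) volume :=
      (hhm.indicator (measurableSet_toMeasurable _ _)).congr
        (indicator_ae_eq_of_ae_eq_set hST)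
    have hbound_pt : ∀ l, ‖(S ξ).indicator (h ξ) l‖
        ≤ (tsupport ψ).indicator (fun _ => (ε ξ)⁻¹ * C) l := by
      intro l
      have hind_nonneg : (0:ℝ) ≤ (tsupport ψ).indicator (fun _ => (ε ξ)⁻¹ * C) l :=
        Set.indicator_nonneg
          (fun _ _ => mul_nonneg (inv_nonneg.2 (hε ξ hξ).1.le) hC0) l
      by_cases hls : l ∈ S ξ
      · rw [Set.indicator_of_mem hls]
        by_cases hlt : l ∈ tsupport ψ
        · rw [Set.indicator_of_mem hlt]
          have hlE : l.1 ∈ E' := (hψs hlt).1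
          have hε1 := (hε ξ hξ).1
          have hε2 := (hε ξ hξ).2 l.1 hlE
          have hd : 0 < V ξ l.1 - U ξ l.1 := hε1.trans hε2
          rw [hhdef]
          simp only [norm_mul, Complex.norm_real, Real.norm_eq_abs,
            abs_of_pos (inv_pos.2 hd)]
          have h1 : (V ξ l.1 - U ξ l.1)⁻¹ ≤ (ε ξ)⁻¹ :=
            inv_anti₀ hε1 hε2.le
          exact mul_le_mul h1 (hC l) (norm_nonneg _) (inv_nonneg.2 hε1.le)
        · have hl0 : ψ l = 0 := image_eq_zero_of_notMem_tsupport hlt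
          rw [hhdef]
          simp only [hl0, mul_zero, norm_zero]
          exact hind_nonneg
      · rw [Set.indicator_of_notMem hls]
        simpa using hind_nonneg
    have hdom : Integrable ((tsupport ψ).indicator
        (fun _ : (Fin (t - 1) → ℝ) × ℝ => (ε ξ)⁻¹ * C)) volume :=
      (integrable_indicator_iff (isClosed_tsupport ψ).measurableSet).2
        (integrableOn_const hψc.measure_lt_top.ne)
    have hint : Integrable ((S ξ).indicator (h ξ)) volume :=
      Integrable.mono' hdom hfm (Filter.Eventually.of_forall hbound_pt)
    have hint2 : Integrable ((S ξ).indicator (h ξ)) (volume.prod volume) := by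
      rwa [← Measure.volume_eq_prod]
    constructor
    · have := hint2.integral_prod_left
      exact this.aestronglyMeasurable
    · calc (∫ l in S ξ, h ξ l)
          = ∫ l in toMeasurable volume (S ξ), h ξ l := (setIntegral_congr_set hST).symm
        _ = ∫ l, (toMeasurable volume (S ξ)).indicator (h ξ) l :=
            (integral_indicator (measurableSet_toMeasurable _ _)).symm
        _ = ∫ l, (S ξ).indicator (h ξ) l :=
            integral_congr_ae (indicator_ae_eq_of_ae_eq_set hST)
        _ = ∫ x, ∫ y, (S ξ).indicator (h ξ) (x, y) := by
            rw [Measure.volume_eq_prod, integral_prod _ hint2]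
        _ = ∫ x, g ξ x := rfl
  -- pointwise limit
  have hgl : ∀ x, Tendsto (fun ξ => g ξ x) F
      (nhds (E'.indicator (fun x => ψ (x, G x)) x)) := by
    intro x
    by_cases hxE : x ∈ E'
    · rw [Set.indicator_of_mem hxE]
      rw [Metric.tendsto_nhds]
      intro δ hδ
      have hcont : ContinuousAt (fun y => ψ (x, y)) (G x) :=
        (hψ.continuous.comp (Continuous.prodMk_right x)).continuousAt
      obtain ⟨r, hr0, hr⟩ := Metric.continuousAt_iff.1 hcont (δ / 2) (by positivity)
      have hU' : ∀ᶠ ξ in F, dist (U ξ x) (G x) < r :=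
        Metric.tendsto_nhds.1 (hUG x hxE) r hr0
      have hV' : ∀ᶠ ξ in F, dist (V ξ x) (G x) < r :=
        Metric.tendsto_nhds.1 (hVG x hxE) r hr0
      filter_upwards [hmemΞ, hU', hV'] with ξ hξ hU2 hV2
      have hε1 := (hε ξ hξ).1
      have hε2 := (hε ξ hξ).2 x hxE
      have hd : 0 < V ξ x - U ξ x := hε1.trans hε2
      rw [hslice ξ x]
      set a := U ξ x with ha
      set b := V ξ x with hb
      rw [Real.dist_eq] at hU2 hV2
      have hUa' := abs_sub_lt_iff.1 hU2
      have hVa' := abs_sub_lt_iff.1 hV2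
      have hab : a < b := by linarith
      have hIf : IntegrableOn (fun y => ψ (x, y)) (Set.Ico a b) volume :=
        (((hψ.continuous.comp (Continuous.prodMk_right x)).continuousOn).integrableOn_compact
          isCompact_Icc).mono_set Set.Ico_subset_Icc_self
      have hfin : volume (Set.Ico a b) < ⊤ := by
        rw [Real.volume_Ico]; exact ENNReal.ofReal_lt_top
      have hIc : IntegrableOn (fun _ : ℝ => ψ (x, G x)) (Set.Ico a b) volume :=
        integrableOn_const hfin.ne
      have hvol : (volume (Set.Ico a b)).toReal = b - a := by
        rw [Real.volume_Ico, ENNReal.toReal_ofReal (by linarith)]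
      have hdiff : ‖∫ y in Set.Ico a b, (ψ (x, y) - ψ (x, G x))‖ ≤ δ / 2 * (b - a) := by
        have hbd : ∀ y ∈ Set.Ico a b, ‖ψ (x, y) - ψ (x, G x)‖ ≤ δ / 2 := by
          intro y hy
          rw [Set.mem_Ico] at hy
          have hyr : dist y (G x) < r := by
            rw [Real.dist_eq, abs_sub_lt_iff]
            constructor <;> [linarith [hy.2]; linarith [hy.1]]
          have := hr hyr
          rw [dist_eq_norm] at this
          exact this.le
        have := norm_setIntegral_le_of_norm_le_const (μ := volume)
          (s := Set.Ico a b) (C := δ / 2) hfin hbd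
        rwa [measureReal_def, hvol] at this
      have hsplit : (∫ y in Set.Ico a b, (ψ (x, y) - ψ (x, G x)))
          = (∫ y in Set.Ico a b, ψ (x, y)) - Complex.ofReal (b - a) * ψ (x, G x) := by
        rw [integral_sub hIf hIc, setIntegral_const, measureReal_def, hvol, Complex.real_smul]
      have hkey : Complex.ofReal ((b - a)⁻¹) * (∫ y in Set.Ico a b, ψ (x, y)) - ψ (x, G x)
          = Complex.ofReal ((b - a)⁻¹) * ∫ y in Set.Ico a b, (ψ (x, y) - ψ (x, G x)) := by
        rw [hsplit, mul_sub, ← mul_assoc, ← Complex.ofReal_mul,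
          inv_mul_cancel₀ hd.ne', Complex.ofReal_one, one_mul]
      have hn1 : ‖(Complex.ofReal ((b - a)⁻¹))‖ = (b - a)⁻¹ := by
        rw [Complex.norm_real, Real.norm_eq_abs, abs_of_pos (inv_pos.2 hd)]
      rw [dist_eq_norm, hkey, norm_mul, hn1]
      calc (b - a)⁻¹ * ‖∫ y in Set.Ico a b, (ψ (x, y) - ψ (x, G x))‖
          ≤ (b - a)⁻¹ * (δ / 2 * (b - a)) :=
            mul_le_mul_of_nonneg_left hdiff (by positivity)
        _ = δ / 2 := by field_simp
        _ < δ := by linarith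
    · rw [Set.indicator_of_notMem hxE]
      have : ∀ ξ, g ξ x = 0 := fun ξ => hzero ξ x hxE
      simp only [this]
      exact tendsto_const_nhds
  -- dominated convergence
  have hbint : Integrable (K.indicator (fun _ : Fin (t - 1) → ℝ => C)) volume :=
    (integrable_indicator_iff hKc.isClosed.measurableSet).2
      (integrableOn_const hKc.measure_lt_top.ne)
  have hmain : Tendsto (fun ξ => ∫ x, g ξ x) F
      (nhds (∫ x, E'.indicator (fun x => ψ (x, G x)) x)) := by
    refine tendsto_integral_filter_of_dominated_convergence
      (K.indicator fun _ => C) ?_ ?_ hbint (Filter.Eventually.of_forall hgl)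
    · filter_upwards [hmemΞ] with ξ hξ using (key ξ hξ).1
    · filter_upwards [hmemΞ] with ξ hξ using
        Filter.Eventually.of_forall (hgbound ξ hξ)
  have htarget : (∫ x, E'.indicator (fun x => ψ (x, G x)) x)
      = ∫ l' in E', ψ (l', G l') := integral_indicator hE'.measurableSet
  rw [htarget] at hmain
  refine hmain.congr' ?_
  filter_upwards [hmemΞ] with ξ hξ using ((key ξ hξ).2).symm
end

section
/- (Main theorem, discrete case.) Let f(x;λ) = λ_t − F(x;λ′) with F ∈ C¹ satisfy the standard nondegeneracy assumptions on W × E. Let m = ∑_{j=1}^{ν} μ_j δ_{x(P_j)} be a discrete image with points x(P_j) ∈ W and weights μ_j ∈ ℝ. For a discretization {λ*, d} of the parameter space with steps d = (d₁,…,d_t) and D = max_k d_k, let H(λ;λ*,d) = ∑_j μ_j p(x(P_j),λ;λ*,d) be the weighted Hough counter, where p(x,λ;λ*,d) = 1 iff −d_t/2 ≤ λ_t − F(x;c′(λ′)) < d_t/2 (c′ denoting rounding of λ′ to the nearest grid point). Then, as D → 0⁺, the rescaled Hough counter H(·;λ*,d)/d_t converges in the sense of distributions on any bounded open T ⊆ E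 to the generalized Radon transform (R_f m)(λ) = ∑_j μ_j δ(λ_t − F(x(P_j);λ′)): that is, ∫_T (H(λ;λ*,d)/d_t) ψ(λ) dλ → ∑_j μ_j ∫ ψ(λ′, F(x(P_j);λ′)) dλ′ for every ψ ∈ C¹_c(T). -/
open MeasureTheory

lemma round_abs_le (y c d : ℝ) (hd : 0 < d) :
    |(c + (⌊(1:ℝ)/2 + (y - c)/d⌋ : ℝ) * d) - y| ≤ d / 2 := by
  set u := (y - c)/d with hu
  have hyd : y = c + u * d := by rw [hu, div_mul_cancel₀ _ hd.ne']; ring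
  have h1 : (⌊(1:ℝ)/2 + u⌋ : ℝ) ≤ 1/2 + u := Int.floor_le _
  have h2 : (1:ℝ)/2 + u - 1 < ⌊(1:ℝ)/2 + u⌋ := Int.sub_one_lt_floor _
  rw [abs_le]
  constructor <;> nlinarith [Int.floor_le ((1:ℝ)/2 + u)]

lemma strip_measurable {m : ℕ} {B : Set (Fin m → ℝ)} (hB : MeasurableSet B)
    {G : (Fin m → ℝ) → ℝ} (hG : Measurable G) (dt : ℝ) :
    MeasurableSet {l : (Fin m → ℝ) × ℝ | l.1 ∈ B ∧ (-(dt/2) ≤ l.2 - G l.1 ∧ l.2 - G l.1 < dt/2)} := by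
  have h1 : Measurable fun l : (Fin m → ℝ) × ℝ => l.2 - G l.1 :=
    measurable_snd.sub (hG.comp measurable_fst)
  exact ((hB.preimage measurable_fst).inter
    ((measurableSet_le measurable_const h1).inter (measurableSet_lt h1 measurable_const)))

lemma strip_measure {m : ℕ} {B : Set (Fin m → ℝ)} (hB : MeasurableSet B)
    {G : (Fin m → ℝ) → ℝ} (hG : Measurable G) {dt : ℝ} (hdt : 0 < dt) :
    volume {l : (Fin m → ℝ) × ℝ | l.1 ∈ B ∧ (-(dt/2) ≤ l.2 - G l.1 ∧ l.2 - G l.1 < dt/2)}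
      = volume B * ENNReal.ofReal dt := by
  have hS := strip_measurable hB hG dt
  have hp : volume {l : (Fin m → ℝ) × ℝ | l.1 ∈ B ∧ (-(dt/2) ≤ l.2 - G l.1 ∧ l.2 - G l.1 < dt/2)}
      = ∫⁻ a, volume (Prod.mk a ⁻¹' {l : (Fin m → ℝ) × ℝ | l.1 ∈ B ∧ (-(dt/2) ≤ l.2 - G l.1 ∧ l.2 - G l.1 < dt/2)}) :=
    Measure.prod_apply hS
  rw [hp]
  have hfib : ∀ a : Fin m → ℝ,
      volume (Prod.mk a ⁻¹' {l : (Fin m → ℝ) × ℝ | l.1 ∈ B ∧ (-(dt/2) ≤ l.2 - G l.1 ∧ l.2 - G l.1 < dt/2)})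
        = B.indicator (fun _ => ENNReal.ofReal dt) a := by
    intro a
    by_cases ha : a ∈ B
    · have : Prod.mk a ⁻¹' {l : (Fin m → ℝ) × ℝ | l.1 ∈ B ∧ (-(dt/2) ≤ l.2 - G l.1 ∧ l.2 - G l.1 < dt/2)}
          = Set.Ico (G a - dt/2) (G a + dt/2) := by
        ext y; simp only [Set.mem_preimage, Set.mem_setOf_eq, Set.mem_Ico]
        constructor
        · rintro ⟨_, h1, h2⟩; constructor <;> linarith
        · rintro ⟨h1, h2⟩; exact ⟨ha, by linarith, by linarith⟩
      rw [this, Real.volume_Ico, Set.indicator_of_mem ha]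
      congr 1; ring
    · have : Prod.mk a ⁻¹' {l : (Fin m → ℝ) × ℝ | l.1 ∈ B ∧ (-(dt/2) ≤ l.2 - G l.1 ∧ l.2 - G l.1 < dt/2)}
          = ∅ := by
        ext y; simp only [Set.mem_preimage, Set.mem_setOf_eq, Set.mem_empty_iff_false, iff_false]
        rintro ⟨h, _⟩; exact ha h
      rw [this, Set.indicator_of_notMem ha, measure_empty]
  simp_rw [hfib]
  rw [lintegral_indicator_const hB]
  ring

variable {Ee : Type*} [NormedAddCommGroup Ee] [NormedSpace ℝ Ee] [CompleteSpace Ee]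

lemma ite_eq_indicator_slice {m : ℕ} (G : (Fin m → ℝ) → ℝ) (dt : ℝ) (x : Fin m → ℝ) (c : Ee) :
    (fun y : ℝ => (if -(dt/2) ≤ y - G x ∧ y - G x < dt/2 then (1:ℝ) else 0) • c)
      = Set.indicator (Set.Ico (G x - dt/2) (G x + dt/2)) (fun _ => c) := by
  funext y
  by_cases hy : -(dt/2) ≤ y - G x ∧ y - G x < dt/2
  · rw [if_pos hy, Set.indicator_of_mem, one_smul]
    exact Set.mem_Ico.2 ⟨by linarith [hy.1], by linarith [hy.2]⟩
  · rw [if_neg hy, Set.indicator_of_notMem, zero_smul]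
    intro hmem
    rcases Set.mem_Ico.1 hmem with ⟨h1, h2⟩
    exact hy ⟨by linarith, by linarith⟩

lemma slice_integral {m : ℕ} (G : (Fin m → ℝ) → ℝ) {dt : ℝ} (hdt : 0 < dt) (x : Fin m → ℝ) (c : Ee) :
    ∫ y : ℝ, (if -(dt/2) ≤ y - G x ∧ y - G x < dt/2 then (1:ℝ) else 0) • c = dt • c := by
  have := ite_eq_indicator_slice G dt x c
  calc ∫ y : ℝ, (if -(dt/2) ≤ y - G x ∧ y - G x < dt/2 then (1:ℝ) else 0) • c
      = ∫ y : ℝ, Set.indicator (Set.Ico (G x - dt/2) (G x + dt/2)) (fun _ => c) y := by rw [this]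
    _ = (volume (Set.Ico (G x - dt/2) (G x + dt/2))).toReal • c :=
        integral_indicator_const c measurableSet_Ico
    _ = dt • c := by
        rw [Real.volume_Ico]
        congr 1
        rw [show G x + dt/2 - (G x - dt/2) = dt by ring, ENNReal.toReal_ofReal hdt.le]

lemma slice_integrable {m : ℕ} (G : (Fin m → ℝ) → ℝ) (dt : ℝ) (x : Fin m → ℝ) (c : Ee) :
    Integrable (fun y : ℝ => (if -(dt/2) ≤ y - G x ∧ y - G x < dt/2 then (1:ℝ) else 0) • c) := by
  rw [ite_eq_indicator_slice G dt x c]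
  rw [integrable_indicator_iff measurableSet_Ico]
  exact integrableOn_const (by rw [Real.volume_Ico]; exact ENNReal.ofReal_ne_top)

lemma graph_aesm {m : ℕ} {G : (Fin m → ℝ) → ℝ} (hG : Measurable G)
    {h : (Fin m → ℝ) → ℂ} (hh : Continuous h) (dt : ℝ) :
    AEStronglyMeasurable (fun l : (Fin m → ℝ) × ℝ =>
      (if -(dt/2) ≤ l.2 - G l.1 ∧ l.2 - G l.1 < dt/2 then (1:ℝ) else 0) • h l.1) volume := by
  have h1 : Measurable fun l : (Fin m → ℝ) × ℝ => l.2 - G l.1 :=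
    measurable_snd.sub (hG.comp measurable_fst)
  have hS : MeasurableSet {l : (Fin m → ℝ) × ℝ | -(dt/2) ≤ l.2 - G l.1 ∧ l.2 - G l.1 < dt/2} :=
    (measurableSet_le measurable_const h1).inter (measurableSet_lt h1 measurable_const)
  exact ((Measurable.ite hS measurable_const measurable_const).smul (f := fun l : (Fin m → ℝ) × ℝ => if -(dt/2) ≤ l.2 - G l.1 ∧ l.2 - G l.1 < dt/2 then (1:ℝ) else 0)
    ((hh.measurable).comp measurable_fst)).aestronglyMeasurable

lemma graph_integrable {m : ℕ} {G : (Fin m → ℝ) → ℝ} (hG : Measurable G)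
    {h : (Fin m → ℝ) → ℂ} (hh : Continuous h) (hhc : HasCompactSupport h)
    {dt : ℝ} (hdt : 0 < dt) :
    Integrable (fun l : (Fin m → ℝ) × ℝ =>
      (if -(dt/2) ≤ l.2 - G l.1 ∧ l.2 - G l.1 < dt/2 then (1:ℝ) else 0) • h l.1) := by
  have hvol : (volume : Measure ((Fin m → ℝ) × ℝ)) = (volume : Measure (Fin m → ℝ)).prod volume := rfl
  rw [hvol]
  rw [integrable_prod_iff (by rw [← hvol]; exact graph_aesm hG hh dt)]
  constructor
  · exact Filter.Eventually.of_forall (fun x => slice_integrable G dt x (h x))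
  · have key : (fun x => ∫ y : ℝ, ‖(if -(dt/2) ≤ y - G x ∧ y - G x < dt/2 then (1:ℝ) else 0) • h x‖)
        = fun x => dt * ‖h x‖ := by
      funext x
      have heq : ∀ y : ℝ, ‖(if -(dt/2) ≤ y - G x ∧ y - G x < dt/2 then (1:ℝ) else 0) • h x‖
          = (if -(dt/2) ≤ y - G x ∧ y - G x < dt/2 then (1:ℝ) else 0) • ‖h x‖ := by
        intro y
        rw [norm_smul, smul_eq_mul]
        congr 1
        split_ifs <;> simp
      simp_rw [heq]
      rw [slice_integral G hdt x (‖h x‖)]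
      rw [smul_eq_mul]
    rw [key]
    exact (hh.norm.integrable_of_hasCompactSupport hhc.norm).const_mul dt

lemma graph_integral {m : ℕ} {G : (Fin m → ℝ) → ℝ} (hG : Measurable G)
    {h : (Fin m → ℝ) → ℂ} (hh : Continuous h) (hhc : HasCompactSupport h)
    {dt : ℝ} (hdt : 0 < dt) :
    ∫ l : (Fin m → ℝ) × ℝ,
      (if -(dt/2) ≤ l.2 - G l.1 ∧ l.2 - G l.1 < dt/2 then (1:ℝ) else 0) • h l.1
      = dt • ∫ l', h l' := by
  have hi := graph_integrable hG hh hhc hdt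
  have hvol : (volume : Measure ((Fin m → ℝ) × ℝ)) = (volume : Measure (Fin m → ℝ)).prod volume := rfl
  rw [hvol] at hi
  calc ∫ l : (Fin m → ℝ) × ℝ, (if -(dt/2) ≤ l.2 - G l.1 ∧ l.2 - G l.1 < dt/2 then (1:ℝ) else 0) • h l.1
      = ∫ x, ∫ y : ℝ, (if -(dt/2) ≤ y - G x ∧ y - G x < dt/2 then (1:ℝ) else 0) • h x :=
        integral_prod _ hi
    _ = ∫ x, dt • h x := by
        congr 1; funext x; exact slice_integral G hdt x (h x)
    _ = dt • ∫ l', h l' := integral_smul dt h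

set_option maxHeartbeats 1000000 in
/-- Main theorem, discrete case: for a discrete image `m = ∑_j μ_j δ_{x(P_j)}` and a
`λ_t`-solvable `C¹` family `f(x;λ) = λ_t − F(x;λ′)` satisfying the nondegeneracy
assumptions, the rescaled weighted Hough counter `H(·;λ*,d)/d_t` (built from the kernel
`p(x,λ;λ*,d) = 𝟙{−d_t/2 ≤ λ_t − F(x;c′(λ′)) < d_t/2}`, with `c′` the nearest-grid-point
rounding) converges, as the maximal discretization step tends to `0⁺`, in the sense of
distributions on any bounded open `T ⊆ E`, to the generalized Radon transform
`(R_f m) = ∑_j μ_j δ(λ_t − F(x(P_j);λ′))`. -/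
theorem stmt_18 {n t : ℕ} (hn : 2 ≤ n) (ht : 2 ≤ t)
    (W : Set (Fin n → ℝ)) (hW : IsOpen W) (hWne : W.Nonempty)
    (E : Set ((Fin (t - 1) → ℝ) × ℝ)) (hE : IsOpen E) (hEne : E.Nonempty)
    (F : (Fin n → ℝ) → (Fin (t - 1) → ℝ) → ℝ)
    (hF : ContDiff ℝ 1 (fun p : (Fin n → ℝ) × ((Fin (t - 1) → ℝ)) => F p.1 p.2))
    (hSne : ∀ l ∈ E, ({x ∈ W | F x l.1 = l.2} : Set (Fin n → ℝ)).Nonempty)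
    (hgrad : ∀ l ∈ E, ∀ x ∈ W, F x l.1 = l.2 → fderiv ℝ (fun y => F y l.1) x ≠ 0)
    (ν : ℕ) (x : Fin ν → (Fin n → ℝ)) (hx : ∀ j, x j ∈ W) (μ : Fin ν → ℝ)
    (T : Set ((Fin (t - 1) → ℝ) × ℝ)) (hT : IsOpen T)
    (hTb : Bornology.IsBounded T) (hTE : T ⊆ E)
    (lamStar : Fin (t - 1) → ℝ)
    (ψ : ((Fin (t - 1) → ℝ) × ℝ) → ℂ)
    (hψ : ContDiff ℝ 1 ψ) (hψc : HasCompactSupport ψ) (hψs : tsupport ψ ⊆ T) :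
    ∀ ε > 0, ∃ δ > 0, ∀ (d' : Fin (t - 1) → ℝ) (dt : ℝ),
      (∀ k, 0 < d' k ∧ d' k < δ) → 0 < dt → dt < δ →
      ‖(∫ l in T,
          Complex.ofReal ((∑ j : Fin ν, μ j *
            (if -(dt / 2) ≤ l.2 - F (x j)
                  (fun k => lamStar k + (⌊(1 : ℝ) / 2 + (l.1 k - lamStar k) / d' k⌋ : ℝ) * d' k) ∧
                l.2 - F (x j)
                  (fun k => lamStar k + (⌊(1 : ℝ) / 2 + (l.1 k - lamStar k) / d' k⌋ : ℝ) * d' k)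
                  < dt / 2
              then 1 else 0)) / dt) * ψ l) -
        ∑ j : Fin ν, Complex.ofReal (μ j) * ∫ l' : Fin (t - 1) → ℝ, ψ (l', F (x j) l')‖ < ε := by
  intro ε hε
  -- basic constants
  obtain ⟨R, hR, hKR⟩ := hψc.isBounded.subset_closedBall_lt 0 0
  set B : Set (Fin (t - 1) → ℝ) := Metric.closedBall 0 R with hBdef
  set B' : Set (Fin (t - 1) → ℝ) := Metric.closedBall 0 (R + 1) with hB'def
  have hBmeas : MeasurableSet B := measurableSet_closedBall
  have hvolB_lt : volume B < ⊤ := measure_closedBall_lt_top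
  set volB : ℝ := (volume B).toReal with hvolBdef
  have hvolB0 : 0 ≤ volB := ENNReal.toReal_nonneg
  set M : ℝ := ∑ j : Fin ν, |μ j| with hMdef
  have hM0 : 0 ≤ M := Finset.sum_nonneg fun j _ => abs_nonneg _
  set ε' : ℝ := ε / (M * volB + 1) with hε'def
  have hε' : 0 < ε' := div_pos hε (by positivity)
  -- uniform continuity of ψ
  have hψcont : Continuous ψ := hψ.continuous
  have hψu : UniformContinuous ψ := hψc.uniformContinuous_of_continuous hψcont
  obtain ⟨η, hη, hψη⟩ := Metric.uniformContinuous_iff.1 hψu ε' hε'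
  -- uniform continuity of G on B'
  have hFc : ∀ j : Fin ν, Continuous fun l' => F (x j) l' :=
    fun j => hF.continuous.comp (Continuous.prodMk_right (x j))
  set G : (Fin (t - 1) → ℝ) → Fin ν → ℝ := fun l' j => F (x j) l' with hGdef
  have hGc : Continuous G := continuous_pi fun j => hFc j
  have hGu : UniformContinuousOn G B' :=
    (isCompact_closedBall _ _).uniformContinuousOn_of_continuous hGc.continuousOn
  obtain ⟨δF, hδF, hGδ⟩ := Metric.uniformContinuousOn_iff.1 hGu (η / 2) (by positivity)
  -- bound for ψ
  obtain ⟨Cψ, hCψ⟩ := hψcont.bounded_above_of_compact_support hψc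
  -- choose δ
  set δ0 : ℝ := min 1 (min η δF) with hδ0def
  have hδ0 : 0 < δ0 := lt_min one_pos (lt_min hη hδF)
  refine ⟨δ0, hδ0, ?_⟩
  intro d' dt hd' hdt hdtδ
  have hδ0le1 : δ0 ≤ 1 := min_le_left _ _
  have hδ0leη : δ0 ≤ η := le_trans (min_le_right _ _) (min_le_left _ _)
  have hδ0leδF : δ0 ≤ δF := le_trans (min_le_right _ _) (min_le_right _ _)
  -- definitions
  set r : (Fin (t - 1) → ℝ) → (Fin (t - 1) → ℝ) :=
    fun a k => lamStar k + (⌊(1 : ℝ) / 2 + (a k - lamStar k) / d' k⌋ : ℝ) * d' k with hrdef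
  have hrmeas : Measurable r := by
    apply measurable_pi_lambda
    intro k
    have h0 : Measurable fun a : Fin (t - 1) → ℝ => (1 : ℝ) / 2 + (a k - lamStar k) / d' k :=
      measurable_const.add (((measurable_pi_apply k).sub measurable_const).div_const _)
    have h1 : Measurable fun a : Fin (t - 1) → ℝ => (⌊(1 : ℝ) / 2 + (a k - lamStar k) / d' k⌋ : ℝ) :=
      (measurable_from_top : Measurable (Int.cast : ℤ → ℝ)).comp h0.floor
    exact (measurable_const.add (h1.mul_const _))
  have hrclose : ∀ a, dist (r a) a ≤ δ0 / 2 := by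
    intro a
    rw [dist_pi_le_iff (by positivity)]
    intro k
    rw [Real.dist_eq]
    calc |r a k - a k| ≤ d' k / 2 := round_abs_le (a k) (lamStar k) (d' k) (hd' k).1
      _ ≤ δ0 / 2 := by linarith [(hd' k).2]
  set g : Fin ν → (Fin (t - 1) → ℝ) → ℝ := fun j a => F (x j) (r a) with hgdef
  have hgmeas : ∀ j, Measurable (g j) := fun j => (hFc j).measurable.comp hrmeas
  set indf : Fin ν → ((Fin (t - 1) → ℝ) × ℝ) → ℝ := fun j l =>
    if -(dt / 2) ≤ l.2 - g j l.1 ∧ l.2 - g j l.1 < dt / 2 then 1 else 0 with hindfdef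
  set S' : Fin ν → Set ((Fin (t - 1) → ℝ) × ℝ) := fun j =>
    {l | l.1 ∈ B ∧ (-(dt / 2) ≤ l.2 - g j l.1 ∧ l.2 - g j l.1 < dt / 2)} with hS'def
  have hS'meas : ∀ j, MeasurableSet (S' j) := fun j => strip_measurable hBmeas (hgmeas j) dt
  have hS'vol : ∀ j, volume (S' j) = volume B * ENNReal.ofReal dt :=
    fun j => strip_measure hBmeas (hgmeas j) hdt
  have hS'vol_lt : ∀ j, volume (S' j) < ⊤ := by
    intro j; rw [hS'vol j]; exact ENNReal.mul_lt_top hvolB_lt ENNReal.ofReal_lt_top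
  have hS'toReal : ∀ j, (volume (S' j)).toReal = volB * dt := by
    intro j; rw [hS'vol j, ENNReal.toReal_mul, ENNReal.toReal_ofReal hdt.le]
  -- ψ vanishing off B in the first coordinate
  have hψ0 : ∀ (a : Fin (t - 1) → ℝ) (y : ℝ), a ∉ B → ψ (a, y) = 0 := by
    intro a y ha
    apply image_eq_zero_of_notMem_tsupport
    intro hmem
    have h1 : (a, y) ∈ Metric.closedBall (0 : (Fin (t - 1) → ℝ) × ℝ) R := hKR hmem
    have h2 : ‖((a, y) : (Fin (t - 1) → ℝ) × ℝ)‖ ≤ R := mem_closedBall_zero_iff.1 h1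
    apply ha
    rw [hBdef, Metric.mem_closedBall]
    calc dist a 0 ≤ max (dist a 0) (dist y 0) := le_max_left _ _
      _ = dist ((a, y) : (Fin (t - 1) → ℝ) × ℝ) (0, 0) := by rw [Prod.dist_eq]
      _ ≤ R := Metric.mem_closedBall.1 h1
  -- key closeness estimate
  have hclose : ∀ (j : Fin ν) (l : (Fin (t - 1) → ℝ) × ℝ), l ∈ S' j →
      ‖ψ l - ψ (l.1, F (x j) l.1)‖ ≤ ε' := by
    intro j l hl
    obtain ⟨hlB, hc1, hc2⟩ := hl
    have haB' : l.1 ∈ B' := by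
      rw [hB'def, Metric.mem_closedBall]
      calc dist l.1 0 ≤ R := Metric.mem_closedBall.1 hlB
        _ ≤ R + 1 := by linarith
    have hraB' : r l.1 ∈ B' := by
      rw [hB'def, Metric.mem_closedBall]
      calc dist (r l.1) 0 ≤ dist (r l.1) l.1 + dist l.1 0 := dist_triangle _ _ _
        _ ≤ δ0 / 2 + R := add_le_add (hrclose l.1) (Metric.mem_closedBall.1 hlB)
        _ ≤ R + 1 := by linarith
    have hdistF : |F (x j) (r l.1) - F (x j) l.1| < η / 2 := by
      have hd : dist (r l.1) l.1 < δF :=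
        lt_of_le_of_lt (hrclose l.1) (by linarith)
      have := hGδ (r l.1) hraB' l.1 haB' hd
      calc |F (x j) (r l.1) - F (x j) l.1| = dist (G (r l.1) j) (G l.1 j) := by
            rw [Real.dist_eq]
        _ ≤ dist (G (r l.1)) (G l.1) := dist_le_pi_dist _ _ j
        _ < η / 2 := this
    have hdist2 : |l.2 - F (x j) l.1| < η := by
      have h1 : |l.2 - g j l.1| ≤ dt / 2 := abs_le.2 ⟨by linarith, hc2.le⟩
      have hdtη : dt < η := lt_of_lt_of_le hdtδ hδ0leη
      calc |l.2 - F (x j) l.1| = |(l.2 - g j l.1) + (F (x j) (r l.1) - F (x j) l.1)| := by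
            rw [hgdef]; ring_nf
        _ ≤ |l.2 - g j l.1| + |F (x j) (r l.1) - F (x j) l.1| := abs_add_le _ _
        _ < dt / 2 + η / 2 := by
            exact add_lt_add_of_le_of_lt h1 hdistF
        _ ≤ η := by linarith
    have hdistl : dist l (l.1, F (x j) l.1) < η := by
      rw [Prod.dist_eq]
      simp only [dist_self]
      rw [max_eq_right (dist_nonneg)]
      rw [Real.dist_eq]
      exact hdist2
    exact (le_of_lt (by simpa [dist_eq_norm] using hψη hdistl))
  -- per-j objects
  set A : Fin ν → ((Fin (t - 1) → ℝ) × ℝ) → ℂ := fun j l => (dt⁻¹ * indf j l) • ψ l with hAdef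
  set h : Fin ν → (Fin (t - 1) → ℝ) → ℂ := fun j l' => ψ (l', F (x j) l') with hhdef
  have hhc : ∀ j, Continuous (h j) :=
    fun j => hψcont.comp (continuous_id.prodMk (hFc j))
  have hhcs : ∀ j, HasCompactSupport (h j) := by
    intro j
    apply HasCompactSupport.intro (isCompact_closedBall (0 : Fin (t - 1) → ℝ) R)
    intro a ha
    exact hψ0 a (F (x j) a) ha
  set Bd : Fin ν → ((Fin (t - 1) → ℝ) × ℝ) → ℂ := fun j l => (dt⁻¹ * indf j l) • h j l.1 with hBddef
  -- measurability of A and indicator-type functions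
  have hindmeas : ∀ j, Measurable (indf j) := by
    intro j
    have h1 : Measurable fun l : (Fin (t - 1) → ℝ) × ℝ => l.2 - g j l.1 :=
      measurable_snd.sub ((hgmeas j).comp measurable_fst)
    have hS : MeasurableSet {l : (Fin (t - 1) → ℝ) × ℝ |
        -(dt / 2) ≤ l.2 - g j l.1 ∧ l.2 - g j l.1 < dt / 2} :=
      (measurableSet_le measurable_const h1).inter (measurableSet_lt h1 measurable_const)
    exact Measurable.ite hS measurable_const measurable_const
  have hAmeas : ∀ j, AEStronglyMeasurable (A j) volume := by
    intro j
    exact ((measurable_const.mul (hindmeas j)).smul hψcont.measurable).aestronglyMeasurable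
  -- integrability of A j via domination
  have hdomInt : ∀ (j : Fin ν) (c : ℝ), Integrable ((S' j).indicator (fun _ => c)) := by
    intro j c
    rw [integrable_indicator_iff (hS'meas j)]
    exact integrableOn_const (hS'vol_lt j).ne
  have hdomIntegral : ∀ (j : Fin ν) (c : ℝ),
      ∫ l, (S' j).indicator (fun _ => c) l = (volB * dt) * c := by
    intro j c
    rw [integral_indicator_const c (hS'meas j), Measure.real, hS'toReal j, smul_eq_mul]
  have hAabs : ∀ j l, ‖A j l‖ ≤ (S' j).indicator (fun _ => dt⁻¹ * Cψ) l := by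
    intro j l
    by_cases hcond : -(dt / 2) ≤ l.2 - g j l.1 ∧ l.2 - g j l.1 < dt / 2
    · by_cases hlB : l.1 ∈ B
      · have hmem : l ∈ S' j := ⟨hlB, hcond⟩
        rw [Set.indicator_of_mem hmem]
        rw [hAdef]
        simp only [hindfdef, if_pos hcond, mul_one]
        rw [norm_smul, Real.norm_eq_abs, abs_of_pos (show (0:ℝ) < dt⁻¹ by positivity)]
        exact mul_le_mul_of_nonneg_left (hCψ l) (by positivity)
      · have hnm : l ∉ S' j := fun hmem => hlB hmem.1
        rw [Set.indicator_of_notMem hnm]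
        have : ψ l = 0 := by
          have := hψ0 l.1 l.2 hlB
          simpa using this
        rw [hAdef]; simp only [this, smul_zero, norm_zero]; exact le_refl _
    · have hnm : l ∉ S' j := fun hmem => hcond hmem.2
      rw [Set.indicator_of_notMem hnm, hAdef]
      simp only [hindfdef, if_neg hcond, mul_zero, zero_smul, norm_zero]
      exact le_refl _
  have hAint : ∀ j, Integrable (A j) := by
    intro j
    exact Integrable.mono' (hdomInt j (dt⁻¹ * Cψ)) (hAmeas j)
      (Filter.Eventually.of_forall (hAabs j))
  -- integrability and integral of Bd j
  have hBfun_int : ∀ j, Integrable (fun l : (Fin (t - 1) → ℝ) × ℝ =>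
      (if -(dt/2) ≤ l.2 - g j l.1 ∧ l.2 - g j l.1 < dt/2 then (1:ℝ) else 0) • h j l.1) :=
    fun j => graph_integrable (hgmeas j) (hhc j) (hhcs j) hdt
  have hBdint : ∀ j, Integrable (Bd j) := by
    intro j
    have := (hBfun_int j).smul (dt⁻¹)
    apply this.congr
    apply Filter.Eventually.of_forall
    intro l
    rw [hBddef]
    simp only [Pi.smul_apply, smul_smul, hindfdef]
  have hBdintegral : ∀ j, ∫ l, Bd j l = ∫ l' : Fin (t - 1) → ℝ, ψ (l', F (x j) l') := by
    intro j
    have h1 : (fun l => Bd j l) = fun l : (Fin (t - 1) → ℝ) × ℝ =>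
        dt⁻¹ • ((if -(dt/2) ≤ l.2 - g j l.1 ∧ l.2 - g j l.1 < dt/2 then (1:ℝ) else 0) • h j l.1) := by
      funext l
      rw [hBddef]
      simp only [smul_smul, hindfdef]
    rw [h1, integral_smul, graph_integral (hgmeas j) (hhc j) (hhcs j) hdt, smul_smul,
      inv_mul_cancel₀ hdt.ne', one_smul]
  -- difference bound
  have hdiffabs : ∀ j l, ‖A j l - Bd j l‖ ≤ (S' j).indicator (fun _ => dt⁻¹ * ε') l := by
    intro j l
    by_cases hcond : -(dt / 2) ≤ l.2 - g j l.1 ∧ l.2 - g j l.1 < dt / 2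
    · by_cases hlB : l.1 ∈ B
      · have hmem : l ∈ S' j := ⟨hlB, hcond⟩
        rw [Set.indicator_of_mem hmem, hAdef, hBddef]
        simp only [hindfdef, if_pos hcond, mul_one]
        rw [← smul_sub, norm_smul, Real.norm_eq_abs, abs_of_pos (show (0:ℝ) < dt⁻¹ by positivity)]
        apply mul_le_mul_of_nonneg_left _ (by positivity)
        exact hclose j l hmem
      · have hnm : l ∉ S' j := fun hmem => hlB hmem.1
        rw [Set.indicator_of_notMem hnm]
        have h1 : ψ l = 0 := by have := hψ0 l.1 l.2 hlB; simpa using this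
        have h2 : h j l.1 = 0 := hψ0 l.1 (F (x j) l.1) hlB
        rw [hAdef, hBddef]
        simp only [h1, h2, smul_zero, sub_zero, norm_zero]
        exact le_refl _
    · have hnm : l ∉ S' j := fun hmem => hcond hmem.2
      rw [Set.indicator_of_notMem hnm, hAdef, hBddef]
      simp only [hindfdef, if_neg hcond, mul_zero, zero_smul, sub_zero, norm_zero]
      exact le_refl _
  have hkey : ∀ j, ‖(∫ l, A j l) - ∫ l' : Fin (t - 1) → ℝ, ψ (l', F (x j) l')‖ ≤ ε' * volB := by
    intro j
    rw [← hBdintegral j, ← integral_sub (hAint j) (hBdint j)]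
    calc ‖∫ l, (A j l - Bd j l)‖ ≤ ∫ l, (S' j).indicator (fun _ => dt⁻¹ * ε') l :=
          norm_integral_le_of_norm_le (hdomInt j _) (Filter.Eventually.of_forall (hdiffabs j))
      _ = (volB * dt) * (dt⁻¹ * ε') := hdomIntegral j _
      _ = ε' * volB := by field_simp
  -- rewrite the LHS integral
  have hψ0T : ∀ l ∉ T, ψ l = 0 := fun l hl =>
    image_eq_zero_of_notMem_tsupport (fun hmem => hl (hψs hmem))
  have step1 : (∫ l in T,
        Complex.ofReal ((∑ j : Fin ν, μ j *
          (if -(dt / 2) ≤ l.2 - F (x j)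
                (fun k => lamStar k + (⌊(1 : ℝ) / 2 + (l.1 k - lamStar k) / d' k⌋ : ℝ) * d' k) ∧
              l.2 - F (x j)
                (fun k => lamStar k + (⌊(1 : ℝ) / 2 + (l.1 k - lamStar k) / d' k⌋ : ℝ) * d' k)
                < dt / 2
            then 1 else 0)) / dt) * ψ l)
      = ∑ j : Fin ν, (μ j : ℂ) * ∫ l, A j l := by
    rw [setIntegral_eq_integral_of_forall_compl_eq_zero
      (fun l hl => by rw [hψ0T l hl, mul_zero])]
    have heq : ∀ l : (Fin (t - 1) → ℝ) × ℝ,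
        Complex.ofReal ((∑ j : Fin ν, μ j *
          (if -(dt / 2) ≤ l.2 - F (x j)
                (fun k => lamStar k + (⌊(1 : ℝ) / 2 + (l.1 k - lamStar k) / d' k⌋ : ℝ) * d' k) ∧
              l.2 - F (x j)
                (fun k => lamStar k + (⌊(1 : ℝ) / 2 + (l.1 k - lamStar k) / d' k⌋ : ℝ) * d' k)
                < dt / 2
            then 1 else 0)) / dt) * ψ l
        = ∑ j : Fin ν, (μ j : ℂ) * A j l := by
      intro l
      have hind : ∀ j : Fin ν,
          (if -(dt / 2) ≤ l.2 - F (x j)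
                (fun k => lamStar k + (⌊(1 : ℝ) / 2 + (l.1 k - lamStar k) / d' k⌋ : ℝ) * d' k) ∧
              l.2 - F (x j)
                (fun k => lamStar k + (⌊(1 : ℝ) / 2 + (l.1 k - lamStar k) / d' k⌋ : ℝ) * d' k)
                < dt / 2
            then (1:ℝ) else 0) = indf j l := by
        intro j; rfl
      simp_rw [hind]
      rw [hAdef]
      simp only [Complex.real_smul, Complex.ofReal_div, Complex.ofReal_sum, Complex.ofReal_mul,
        Complex.ofReal_inv]
      rw [div_mul_eq_mul_div, Finset.sum_mul, Finset.sum_div]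
      refine Finset.sum_congr rfl (fun j _ => ?_)
      field_simp
    calc (∫ l, Complex.ofReal ((∑ j : Fin ν, μ j *
          (if -(dt / 2) ≤ l.2 - F (x j)
                (fun k => lamStar k + (⌊(1 : ℝ) / 2 + (l.1 k - lamStar k) / d' k⌋ : ℝ) * d' k) ∧
              l.2 - F (x j)
                (fun k => lamStar k + (⌊(1 : ℝ) / 2 + (l.1 k - lamStar k) / d' k⌋ : ℝ) * d' k)
                < dt / 2
            then 1 else 0)) / dt) * ψ l)
        = ∫ l, ∑ j : Fin ν, (μ j : ℂ) * A j l := by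
          congr 1; funext l; exact heq l
      _ = ∑ j : Fin ν, ∫ l, (μ j : ℂ) * A j l := by
          apply integral_finset_sum
          intro j _
          exact (hAint j).const_mul (μ j : ℂ)
      _ = ∑ j : Fin ν, (μ j : ℂ) * ∫ l, A j l := by
          refine Finset.sum_congr rfl (fun j _ => ?_)
          simpa only [← smul_eq_mul] using integral_smul ((μ j : ℂ)) (A j)
  rw [step1]
  -- final estimate
  rw [← Finset.sum_sub_distrib]
  calc ‖∑ j : Fin ν, (((μ j : ℂ) * ∫ l, A j l) - (μ j : ℂ) * ∫ l' : Fin (t - 1) → ℝ, ψ (l', F (x j) l'))‖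
      ≤ ∑ j : Fin ν, ‖((μ j : ℂ) * ∫ l, A j l) - (μ j : ℂ) * ∫ l' : Fin (t - 1) → ℝ, ψ (l', F (x j) l')‖ :=
        norm_sum_le _ _
    _ ≤ ∑ j : Fin ν, |μ j| * (ε' * volB) := by
        refine Finset.sum_le_sum (fun j _ => ?_)
        rw [← mul_sub, norm_mul, Complex.norm_real, Real.norm_eq_abs]
        exact mul_le_mul_of_nonneg_left (hkey j) (abs_nonneg _)
    _ = M * (ε' * volB) := by rw [hMdef, Finset.sum_mul]
    _ < ε := by
        have h1 : ε' * (M * volB + 1) = ε := div_mul_cancel₀ ε (by positivity)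
        nlinarith [hε', hM0, hvolB0, mul_nonneg hM0 hvolB0]
end
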